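/- Let 0 < s < ℓ, L = 2^ℓ, and x₀, x₁ ∈ [0, L). Write x_b = u_b·2^s + v_b with v_b ∈ [0, 2^s) for b ∈ {0,1}. Define c = wrap(v₀, v₁, 2^s), d = wrap(u₀, u₁, 2^{ℓ-s}), e = 1 if (u₀ + u₁) mod 2^{ℓ-s} = 2^{ℓ-s} − 1 and e = 0 otherwise, and w = wrap(x₀, x₁, L). Then w = d XOR (c AND e). -/

import Mathlib

def wrap (a b M : ℕ) : ℕ := if M ≤ a + b then 1 else 0

theorem stmt1 (ℓ s : ℕ) (hs : 0 < s) (hsl : s < ℓ)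
    (x₀ x₁ u₀ u₁ v₀ v₁ : ℕ)
    (hx₀ : x₀ < 2 ^ ℓ) (hx₁ : x₁ < 2 ^ ℓ)
    (hd₀ : x₀ = u₀ * 2 ^ s + v₀) (hd₁ : x₁ = u₁ * 2 ^ s + v₁)
    (hv₀ : v₀ < 2 ^ s) (hv₁ : v₁ < 2 ^ s)
    (c d e w : ℕ)
    (hc : c = wrap v₀ v₁ (2 ^ s))
    (hd : d = wrap u₀ u₁ (2 ^ (ℓ - s)))
    (he : e = if (u₀ + u₁) % 2 ^ (ℓ - s) = 2 ^ (ℓ - s) - 1 then 1 else 0)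
    (hw : w = wrap x₀ x₁ (2 ^ ℓ)) :
    w = d ^^^ (c &&& e) := by
  subst hc hd he hw hd₀ hd₁
  unfold wrap
  set T := 2 ^ s with hTdef
  set U := 2 ^ (ℓ - s) with hUdef
  have hT : 0 < T := Nat.pow_pos (by norm_num)
  have hU2 : 2 ≤ U := by
    have : 1 ≤ ℓ - s := by omega
    calc 2 = 2 ^ 1 := rfl
    _ ≤ U := Nat.pow_le_pow_right (by norm_num) this
  have hL : 2 ^ ℓ = U * T := by
    rw [hUdef, hTdef, ← pow_add]; congr 1; omega
  rw [hL] at hx₀ hx₁ ⊢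
  have hu₀ : u₀ < U := by
    have : u₀ * T < U * T := by omega
    exact Nat.lt_of_mul_lt_mul_right this
  have hu₁ : u₁ < U := by
    have : u₁ * T < U * T := by omega
    exact Nat.lt_of_mul_lt_mul_right this
  by_cases hdd : U ≤ u₀ + u₁
  · have he0 : ¬ ((u₀ + u₁) % U = U - 1) := by
      have hlt : u₀ + u₁ - U < U := by omega
      have : (u₀ + u₁) % U = u₀ + u₁ - U := by
        rw [Nat.mod_eq_sub_mod hdd, Nat.mod_eq_of_lt hlt]
      omega
    have hw1 : U * T ≤ u₀ * T + v₀ + (u₁ * T + v₁) := by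
      have : U * T ≤ (u₀ + u₁) * T := Nat.mul_le_mul_right _ hdd
      nlinarith
    simp [hdd, he0, hw1]
  · have hmod : (u₀ + u₁) % U = u₀ + u₁ := Nat.mod_eq_of_lt (by omega)
    by_cases hee : u₀ + u₁ = U - 1
    · have he1 : (u₀ + u₁) % U = U - 1 := by omega
      simp only [hdd, he1, if_false, if_true, if_pos rfl]
      by_cases hcc : T ≤ v₀ + v₁
      · have : U * T ≤ u₀ * T + v₀ + (u₁ * T + v₁) := by
          have h1 : (U - 1) * T + T ≤ (u₀ + u₁) * T + v₀ + v₁ := by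
            rw [hee]; omega
          have h2 : (U - 1) * T + T = U * T := by
            have : U - 1 + 1 = U := by omega
            calc (U - 1) * T + T = (U - 1 + 1) * T := by ring
            _ = U * T := by rw [this]
          nlinarith
        simp [hcc, this]
      · have : ¬ (U * T ≤ u₀ * T + v₀ + (u₁ * T + v₁)) := by
          intro h
          have h2 : (U - 1) * T + T = U * T := by
            have : U - 1 + 1 = U := by omega
            calc (U - 1) * T + T = (U - 1 + 1) * T := by ring
            _ = U * T := by rw [this]
          have h3 : (u₀ + u₁) * T = (U - 1) * T := by rw [hee]
          nlinarith
        simp [hcc, this]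
    · have he1 : ¬ ((u₀ + u₁) % U = U - 1) := by omega
      have hsum : u₀ + u₁ ≤ U - 2 := by omega
      have : ¬ (U * T ≤ u₀ * T + v₀ + (u₁ * T + v₁)) := by
        intro h
        have h1 : (u₀ + u₁) * T ≤ (U - 2) * T := Nat.mul_le_mul_right _ hsum
        have h2 : (U - 2) * T + 2 * T = U * T := by
          have hq : U - 2 + 2 = U := by omega
          calc (U - 2) * T + 2 * T = (U - 2 + 2) * T := by ring
          _ = U * T := by rw [hq]
        nlinarith
      simp [hdd, he1, this]
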